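/- Let (Y_n)_{n≥1} be real-valued random variables (each on its own probability space) such that E[Y_n] → 0 and E[Y_n²] → 1 as n → ∞, and sup_n E[Y_n⁴] ≤ C for some finite constant C. Then there exist reals u < 0 < v, a real δ > 0 and an index N₀ such that for all n ≥ N₀: P(Y_n < u) ≥ δ and P(Y_n > v) ≥ δ. -/

import Mathlib

set_option maxHeartbeats 1000000
open MeasureTheory Filter

lemma cs2 {α : Type*} [MeasurableSpace α] (μ : Measure α) {f g : α → ℝ}
    (hf0 : ∀ x, 0 ≤ f x) (hg0 : ∀ x, 0 ≤ g x)
    (hf : MemLp f 2 μ) (hg : MemLp g 2 μ) :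
    (∫ x, f x * g x ∂μ) ^ 2 ≤ (∫ x, f x ^ 2 ∂μ) * (∫ x, g x ^ 2 ∂μ) := by
  have hpq : (2:ℝ).HolderConjugate 2 := Real.HolderConjugate.two_two
  have h := integral_mul_le_Lp_mul_Lq_of_nonneg hpq
    (Filter.Eventually.of_forall hf0) (Filter.Eventually.of_forall hg0)
    (by simpa using hf) (by simpa using hg)
  simp only [Real.rpow_two] at h
  have hA : 0 ≤ ∫ x, f x ^ 2 ∂μ := integral_nonneg fun x => sq_nonneg _
  have hB : 0 ≤ ∫ x, g x ^ 2 ∂μ := integral_nonneg fun x => sq_nonneg _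
  have hL : 0 ≤ ∫ x, f x * g x ∂μ :=
    integral_nonneg fun x => mul_nonneg (hf0 x) (hg0 x)
  have key : ∀ A : ℝ, 0 ≤ A → (A ^ (1/2 : ℝ)) ^ 2 = A := fun A hA => by
    rw [← Real.rpow_two, ← Real.rpow_mul hA]; norm_num
  calc (∫ x, f x * g x ∂μ) ^ 2
      ≤ ((∫ x, f x ^ 2 ∂μ) ^ (1/2:ℝ) * (∫ x, g x ^ 2 ∂μ) ^ (1/2:ℝ)) ^ 2 :=
        pow_le_pow_left₀ hL h 2
    _ = (∫ x, f x ^ 2 ∂μ) * (∫ x, g x ^ 2 ∂μ) := by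
        rw [mul_pow, key _ hA, key _ hB]

lemma anticonc {α : Type*} [MeasurableSpace α] (μ : Measure α) [IsProbabilityMeasure μ]
    {X : α → ℝ} (hXm : StronglyMeasurable X) (hX0 : ∀ x, 0 ≤ X x)
    (hX2 : MemLp X 2 μ) {m : ℝ} (hm : 0 < m)
    (hmean : m ≤ ∫ x, X x ∂μ) (hsq : ∫ x, X x ^ 2 ∂μ ≤ 2) :
    ENNReal.ofReal (m ^ 2 / 32) ≤ μ {x | m / 4 < X x} := by
  set S : Set α := {x | m / 4 < X x} with hSdef
  have hS : MeasurableSet S := hXm.measurable measurableSet_Ioi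
  set g : α → ℝ := S.indicator (fun _ => (1:ℝ)) with hgdef
  have hg0 : ∀ x, 0 ≤ g x := fun x => Set.indicator_nonneg (fun _ _ => zero_le_one) x
  have hg1 : ∀ x, g x ≤ 1 := fun x => Set.indicator_le_self' (fun _ _ => zero_le_one) x
  have hg2 : MemLp g 2 μ := (memLp_const (1:ℝ)).indicator hS
  have hXint : Integrable X μ := hX2.integrable (by norm_num)
  have hXgint : Integrable (fun x => X x * g x) μ := by
    refine hXint.mono ((hXm.aestronglyMeasurable).mul hg2.aestronglyMeasurable) ?_
    refine Filter.Eventually.of_forall fun x => ?_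
    rw [Real.norm_eq_abs, Real.norm_eq_abs, abs_of_nonneg (hX0 x),
      abs_of_nonneg (mul_nonneg (hX0 x) (hg0 x))]
    calc X x * g x ≤ X x * 1 := mul_le_mul_of_nonneg_left (hg1 x) (hX0 x)
      _ = X x := mul_one _
  have hpt : ∀ x, X x ≤ m / 4 + X x * g x := by
    intro x
    by_cases hx : x ∈ S
    · have : g x = 1 := Set.indicator_of_mem hx _
      rw [this, mul_one]; linarith [hm]
    · have hxle : X x ≤ m / 4 := not_lt.1 hx
      have : g x = 0 := Set.indicator_of_notMem hx _
      rw [this, mul_zero, add_zero]; exact hxle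
  have hstep : m ≤ m / 4 + ∫ x, X x * g x ∂μ := by
    calc m ≤ ∫ x, X x ∂μ := hmean
      _ ≤ ∫ x, (m / 4 + X x * g x) ∂μ :=
        integral_mono hXint ((integrable_const _).add hXgint) hpt
      _ = m / 4 + ∫ x, X x * g x ∂μ := by
        rw [integral_add (integrable_const _) hXgint, integral_const]
        simp
  have hcs := cs2 μ hX0 hg0 hX2 hg2
  have hgsq : ∫ x, g x ^ 2 ∂μ = (μ S).toReal := by
    have : ∀ x, g x ^ 2 = g x := by
      intro x
      by_cases hx : x ∈ S <;>
        simp [hgdef, Set.indicator_of_mem, Set.indicator_of_notMem, hx]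
    rw [integral_congr_ae (Filter.Eventually.of_forall this), hgdef,
      integral_indicator_const _ hS]
    simp [Measure.real]
  rw [hgsq] at hcs
  have hIg : 3 * m / 4 ≤ ∫ x, X x * g x ∂μ := by linarith
  have hμr : (0:ℝ) ≤ (μ S).toReal := ENNReal.toReal_nonneg
  have hsq' : (3 * m / 4) ^ 2 ≤ 2 * (μ S).toReal := by
    nlinarith [hcs, hsq, sq_nonneg (∫ x, X x * g x ∂μ)]
  refine ENNReal.ofReal_le_of_le_toReal ?_
  nlinarith

lemma integrable_pow_of_memL4 {α : Type*} [MeasurableSpace α] {μ : Measure α}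
    [IsProbabilityMeasure μ] {X : α → ℝ} (hXm : StronglyMeasurable X)
    (hX4 : MemLp X 4 μ) (k : ℕ) (hk : k ≤ 4) :
    Integrable (fun x => X x ^ k) μ := by
  have hE : Integrable (fun x => ‖X x‖ ^ (4:ℝ)) μ := by
    have := hX4.integrable_norm_rpow (by norm_num) (by norm_num)
    simpa using this
  have hE' : Integrable (fun x => |X x| ^ 4) μ := by
    refine hE.congr (Filter.Eventually.of_forall fun x => ?_)
    show ‖X x‖ ^ (4:ℝ) = |X x| ^ (4:ℕ)
    rw [Real.norm_eq_abs, show (4:ℝ) = ((4:ℕ):ℝ) by norm_num, Real.rpow_natCast]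
  refine Integrable.mono' ((integrable_const (1:ℝ)).add hE')
    ((hXm.pow k).aestronglyMeasurable) (Filter.Eventually.of_forall fun x => ?_)
  simp only [Pi.add_apply]
  rw [Real.norm_eq_abs, abs_pow]
  rcases le_total (|X x|) 1 with h | h
  · have h1 : |X x| ^ k ≤ 1 := pow_le_one₀ (abs_nonneg _) h
    have h2 : (0:ℝ) ≤ |X x| ^ 4 := by positivity
    linarith
  · have h1 : |X x| ^ k ≤ |X x| ^ 4 := pow_le_pow_right₀ h hk
    linarith

lemma moment3 {α : Type*} [MeasurableSpace α] (μ : Measure α) [IsProbabilityMeasure μ]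
    {X : α → ℝ} (hXm : StronglyMeasurable X) (hX0 : ∀ x, 0 ≤ X x)
    (hX4 : MemLp X 4 μ) :
    (∫ x, X x ^ 2 ∂μ) ^ 3 ≤ (∫ x, X x ∂μ) ^ 2 * (∫ x, X x ^ 4 ∂μ) := by
  have hint : ∀ k, k ≤ 4 → Integrable (fun x => X x ^ k) μ :=
    integrable_pow_of_memL4 hXm hX4
  set u : α → ℝ := fun x => Real.sqrt (X x) with hu
  have hum : StronglyMeasurable u := (hXm.measurable.sqrt).stronglyMeasurable
  have hu0 : ∀ x, 0 ≤ u x := fun x => Real.sqrt_nonneg _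
  have husq : ∀ x, u x ^ 2 = X x := fun x => Real.sq_sqrt (hX0 x)
  have huL2 : MemLp u 2 μ := by
    rw [memLp_two_iff_integrable_sq hum.aestronglyMeasurable]
    exact (hint 1 (by norm_num)).congr
      (Filter.Eventually.of_forall fun x =>
        show X x ^ 1 = u x ^ 2 by rw [husq x, pow_one])
  have hg0 : ∀ x, 0 ≤ u x * X x := fun x => mul_nonneg (hu0 x) (hX0 x)
  have hgL2 : MemLp (fun x => u x * X x) 2 μ := by
    rw [memLp_two_iff_integrable_sq (f := fun x => u x * X x)
      (hum.measurable.mul hXm.measurable).aestronglyMeasurable]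
    exact (hint 3 (by norm_num)).congr
      (Filter.Eventually.of_forall fun x =>
        show X x ^ 3 = (u x * X x) ^ 2 by rw [mul_pow, husq x]; ring)
  have hcs1 := cs2 μ hu0 hg0 huL2 hgL2
  have e1 : ∫ x, u x * (u x * X x) ∂μ = ∫ x, X x ^ 2 ∂μ :=
    integral_congr_ae (Filter.Eventually.of_forall fun x =>
      show u x * (u x * X x) = X x ^ 2 by rw [← mul_assoc, ← sq, husq x]; ring)
  have e2 : ∫ x, u x ^ 2 ∂μ = ∫ x, X x ∂μ :=
    integral_congr_ae (Filter.Eventually.of_forall fun x =>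
      show u x ^ 2 = X x from husq x)
  have e3 : ∫ x, (u x * X x) ^ 2 ∂μ = ∫ x, X x ^ 3 ∂μ :=
    integral_congr_ae (Filter.Eventually.of_forall fun x =>
      show (u x * X x) ^ 2 = X x ^ 3 by rw [mul_pow, husq x]; ring)
  rw [e1, e2, e3] at hcs1
  have hXL2 : MemLp X 2 μ := hX4.mono_exponent (by norm_num)
  have hX2L2 : MemLp (fun x => X x ^ 2) 2 μ := by
    rw [memLp_two_iff_integrable_sq
      (hXm.measurable.pow_const 2).aestronglyMeasurable]
    exact (hint 4 (by norm_num)).congr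
      (Filter.Eventually.of_forall fun x =>
        show X x ^ 4 = (X x ^ 2) ^ 2 by ring)
  have hcs2 := cs2 μ hX0 (fun x => sq_nonneg (X x)) hXL2 hX2L2
  have e4 : ∫ x, X x * X x ^ 2 ∂μ = ∫ x, X x ^ 3 ∂μ :=
    integral_congr_ae (Filter.Eventually.of_forall fun x =>
      show X x * X x ^ 2 = X x ^ 3 by ring)
  have e5 : ∫ x, (X x ^ 2) ^ 2 ∂μ = ∫ x, X x ^ 4 ∂μ :=
    integral_congr_ae (Filter.Eventually.of_forall fun x =>
      show (X x ^ 2) ^ 2 = X x ^ 4 by ring)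
  rw [e4, e5] at hcs2
  set A := ∫ x, X x ∂μ
  set B := ∫ x, X x ^ 2 ∂μ
  set D := ∫ x, X x ^ 3 ∂μ
  set E := ∫ x, X x ^ 4 ∂μ
  have hA : 0 ≤ A := integral_nonneg fun x => hX0 x
  have hB : 0 ≤ B := integral_nonneg fun x => sq_nonneg _
  have hD : 0 ≤ D := integral_nonneg fun x => pow_nonneg (hX0 x) 3
  have hE : 0 ≤ E := integral_nonneg fun x => pow_nonneg (hX0 x) 4
  rcases eq_or_lt_of_le hB with hB0 | hB0
  · rw [← hB0]
    simpa using mul_nonneg (sq_nonneg A) hE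
  · nlinarith [sq_nonneg (B^2 - A*D), mul_le_mul_of_nonneg_left hcs2 (sq_nonneg A),
      mul_le_mul_of_nonneg_right hcs1 hB0.le, sq_nonneg D]

lemma pm_sub (z : ℝ) : max z 0 - max (-z) 0 = z := by
  rcases le_total z 0 with h | h
  · rw [max_eq_right h, max_eq_left (neg_nonneg.2 h)]; ring
  · rw [max_eq_left h, max_eq_right (neg_nonpos.2 h)]; ring

lemma pm_sq (z : ℝ) : max z 0 ^ 2 + max (-z) 0 ^ 2 = z ^ 2 := by
  rcases le_total z 0 with h | h
  · rw [max_eq_right h, max_eq_left (neg_nonneg.2 h)]; ring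
  · rw [max_eq_left h, max_eq_right (neg_nonpos.2 h)]; ring

lemma pm_p4 (z : ℝ) : max z 0 ^ 4 ≤ z ^ 4 := by
  rcases le_total z 0 with h | h
  · rw [max_eq_right h]
    have : (0:ℝ) ≤ z ^ 4 := by positivity
    simpa using this
  · rw [max_eq_left h]

lemma pm_m4 (z : ℝ) : max (-z) 0 ^ 4 ≤ z ^ 4 := by
  rcases le_total z 0 with h | h
  · rw [max_eq_left (neg_nonneg.2 h)]; rw [show (-z)^4 = z^4 by ring]
  · rw [max_eq_right (neg_nonpos.2 h)]
    have : (0:ℝ) ≤ z ^ 4 := by positivity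
    simpa using this

theorem stmt16 (Ω : ℕ → Type*) [∀ n, MeasurableSpace (Ω n)]
    (P : ∀ n, Measure (Ω n)) [∀ n, IsProbabilityMeasure (P n)]
    (Y : ∀ n, Ω n → ℝ) (hY : ∀ n, MemLp (Y n) 4 (P n))
    (hmean : Tendsto (fun n => ∫ ω, Y n ω ∂(P n)) atTop (nhds 0))
    (hsq : Tendsto (fun n => ∫ ω, (Y n ω) ^ 2 ∂(P n)) atTop (nhds 1))
    (C : ℝ) (h4 : ∀ n, ∫ ω, (Y n ω) ^ 4 ∂(P n) ≤ C) :
    ∃ (u v δ : ℝ) (N₀ : ℕ), u < 0 ∧ 0 < v ∧ 0 < δ ∧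
      ∀ n, N₀ ≤ n →
        ENNReal.ofReal δ ≤ P n {ω | Y n ω < u} ∧
        ENNReal.ofReal δ ≤ P n {ω | v < Y n ω} := by
  classical
  set Z : ∀ n, Ω n → ℝ := fun n => ((hY n).1).mk (Y n) with hZdef
  have hZm : ∀ n, StronglyMeasurable (Z n) := fun n => (hY n).1.stronglyMeasurable_mk
  have hZae : ∀ n, Y n =ᵐ[P n] Z n := fun n => (hY n).1.ae_eq_mk
  have hZ4 : ∀ n, MemLp (Z n) 4 (P n) := fun n => (hY n).ae_eq (hZae n)
  set Xp : ∀ n, Ω n → ℝ := fun n ω => max (Z n ω) 0 with hXpdef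
  set Xm : ∀ n, Ω n → ℝ := fun n ω => max (-(Z n ω)) 0 with hXmdef
  have hXpm : ∀ n, StronglyMeasurable (Xp n) :=
    fun n => ((hZm n).measurable.max measurable_const).stronglyMeasurable
  have hXmm : ∀ n, StronglyMeasurable (Xm n) :=
    fun n => ((hZm n).measurable.neg.max measurable_const).stronglyMeasurable
  have hXp0 : ∀ n ω, 0 ≤ Xp n ω := fun n ω => le_max_right _ _
  have hXm0 : ∀ n ω, 0 ≤ Xm n ω := fun n ω => le_max_right _ _
  have hXp4 : ∀ n, MemLp (Xp n) 4 (P n) := fun n =>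
    MemLp.of_le (hZ4 n) (hXpm n).aestronglyMeasurable
      (Filter.Eventually.of_forall fun ω => by
        rw [Real.norm_eq_abs, Real.norm_eq_abs, abs_of_nonneg (hXp0 n ω)]
        exact max_le (le_abs_self _) (abs_nonneg _))
  have hXm4 : ∀ n, MemLp (Xm n) 4 (P n) := fun n =>
    MemLp.of_le (hZ4 n) (hXmm n).aestronglyMeasurable
      (Filter.Eventually.of_forall fun ω => by
        rw [Real.norm_eq_abs, Real.norm_eq_abs, abs_of_nonneg (hXm0 n ω)]
        exact max_le (neg_le_abs _) (abs_nonneg _))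
  have hXpint : ∀ n, Integrable (Xp n) (P n) := fun n => (hXp4 n).integrable (by norm_num)
  have hXmint : ∀ n, Integrable (Xm n) (P n) := fun n => (hXm4 n).integrable (by norm_num)
  have hXp2int : ∀ n, Integrable (fun ω => Xp n ω ^ 2) (P n) :=
    fun n => integrable_pow_of_memL4 (hXpm n) (hXp4 n) 2 (by norm_num)
  have hXm2int : ∀ n, Integrable (fun ω => Xm n ω ^ 2) (P n) :=
    fun n => integrable_pow_of_memL4 (hXmm n) (hXm4 n) 2 (by norm_num)
  have hXp4int : ∀ n, Integrable (fun ω => Xp n ω ^ 4) (P n) :=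
    fun n => integrable_pow_of_memL4 (hXpm n) (hXp4 n) 4 (by norm_num)
  have hXm4int : ∀ n, Integrable (fun ω => Xm n ω ^ 4) (P n) :=
    fun n => integrable_pow_of_memL4 (hXmm n) (hXm4 n) 4 (by norm_num)
  have hZ4int : ∀ n, Integrable (fun ω => Z n ω ^ 4) (P n) :=
    fun n => integrable_pow_of_memL4 (hZm n) (hZ4 n) 4 (by norm_num)
  -- integral identities
  have hIY : ∀ n, ∫ ω, Y n ω ∂(P n) = (∫ ω, Xp n ω ∂(P n)) - ∫ ω, Xm n ω ∂(P n) := by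
    intro n
    rw [← integral_sub (hXpint n) (hXmint n)]
    refine integral_congr_ae ((hZae n).mono fun ω h => ?_)
    show Y n ω = Xp n ω - Xm n ω
    rw [h]; exact (pm_sub (Z n ω)).symm
  have hIY2 : ∀ n, ∫ ω, Y n ω ^ 2 ∂(P n)
      = (∫ ω, Xp n ω ^ 2 ∂(P n)) + ∫ ω, Xm n ω ^ 2 ∂(P n) := by
    intro n
    rw [← integral_add (hXp2int n) (hXm2int n)]
    refine integral_congr_ae ((hZae n).mono fun ω h => ?_)
    show Y n ω ^ 2 = Xp n ω ^ 2 + Xm n ω ^ 2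
    rw [h]; exact (pm_sq (Z n ω)).symm
  set C₁ : ℝ := max C 1 with hC₁def
  have hC₁ : (0:ℝ) < C₁ := lt_of_lt_of_le one_pos (le_max_right _ _)
  have hIp4 : ∀ n, ∫ ω, Xp n ω ^ 4 ∂(P n) ≤ C₁ := by
    intro n
    calc ∫ ω, Xp n ω ^ 4 ∂(P n) ≤ ∫ ω, Z n ω ^ 4 ∂(P n) :=
          integral_mono (hXp4int n) (hZ4int n) fun ω => pm_p4 (Z n ω)
      _ = ∫ ω, Y n ω ^ 4 ∂(P n) :=
          (integral_congr_ae ((hZae n).mono fun ω h =>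
            show Y n ω ^ 4 = Z n ω ^ 4 by rw [h])).symm
      _ ≤ C := h4 n
      _ ≤ C₁ := le_max_left _ _
  have hIm4 : ∀ n, ∫ ω, Xm n ω ^ 4 ∂(P n) ≤ C₁ := by
    intro n
    calc ∫ ω, Xm n ω ^ 4 ∂(P n) ≤ ∫ ω, Z n ω ^ 4 ∂(P n) :=
          integral_mono (hXm4int n) (hZ4int n) fun ω => pm_m4 (Z n ω)
      _ = ∫ ω, Y n ω ^ 4 ∂(P n) :=
          (integral_congr_ae ((hZae n).mono fun ω h =>
            show Y n ω ^ 4 = Z n ω ^ 4 by rw [h])).symm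
      _ ≤ C := h4 n
      _ ≤ C₁ := le_max_left _ _
  set c : ℝ := Real.sqrt ((3/8)^3 / C₁) with hcdef
  have hc : 0 < c := Real.sqrt_pos.2 (div_pos (by norm_num) hC₁)
  have hc2 : c ^ 2 = (3/8)^3 / C₁ := Real.sq_sqrt (div_pos (by norm_num) hC₁).le
  -- eventual bounds
  have h1 : ∀ᶠ n in atTop, |∫ ω, Y n ω ∂(P n)| < c / 2 := by
    have := hmean (Metric.ball_mem_nhds (0:ℝ) (half_pos hc))
    filter_upwards [this] with n hn
    simpa [Real.dist_eq] using hn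
  have h2 : ∀ᶠ n in atTop, |(∫ ω, Y n ω ^ 2 ∂(P n)) - 1| < 1/4 := by
    have := hsq (Metric.ball_mem_nhds (1:ℝ) (by norm_num : (0:ℝ) < 1/4))
    filter_upwards [this] with n hn
    simpa [Real.dist_eq] using hn
  obtain ⟨N₀, hN⟩ := eventually_atTop.1 (h1.and h2)
  have hv : (0:ℝ) < c/2/4 := div_pos (half_pos hc) (by norm_num)
  refine ⟨-(c/2/4), c/2/4, (c/2)^2/32, N₀, neg_lt_zero.2 hv, hv,
    div_pos (pow_pos (half_pos hc) 2) (by norm_num), ?_⟩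
  intro n hn
  obtain ⟨h1n, h2n⟩ := hN n hn
  set A := ∫ ω, Xp n ω ∂(P n) with hA
  set B := ∫ ω, Xm n ω ∂(P n) with hB
  set S := ∫ ω, Xp n ω ^ 2 ∂(P n) with hS
  set T := ∫ ω, Xm n ω ^ 2 ∂(P n) with hT
  have hA0 : 0 ≤ A := integral_nonneg fun ω => hXp0 n ω
  have hB0 : 0 ≤ B := integral_nonneg fun ω => hXm0 n ω
  have hS0 : 0 ≤ S := integral_nonneg fun ω => sq_nonneg _
  have hT0 : 0 ≤ T := integral_nonneg fun ω => sq_nonneg _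
  have habs := abs_lt.1 h1n
  rw [hIY n] at habs
  have hQ := abs_lt.1 h2n
  rw [hIY2 n] at hQ
  have hS2 : S ≤ 2 := by linarith
  have hT2 : T ≤ 2 := by linarith
  have hMp : S ^ 3 ≤ A ^ 2 * C₁ :=
    le_trans (moment3 (P n) (hXpm n) (hXp0 n) (hXp4 n))
      (mul_le_mul_of_nonneg_left (hIp4 n) (sq_nonneg A))
  have hMm : T ^ 3 ≤ B ^ 2 * C₁ :=
    le_trans (moment3 (P n) (hXmm n) (hXm0 n) (hXm4 n))
      (mul_le_mul_of_nonneg_left (hIm4 n) (sq_nonneg B))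
  have hmin : c / 2 ≤ A ∧ c / 2 ≤ B := by
    rcases le_total S T with h | h
    · have hT38 : (3:ℝ)/8 ≤ T := by linarith
      have h38 : ((3:ℝ)/8) ^ 3 ≤ T ^ 3 := pow_le_pow_left₀ (by norm_num) hT38 3
      have hcB2 : c ^ 2 ≤ B ^ 2 := by
        rw [hc2, div_le_iff₀ hC₁]; linarith
      have hcB : c ≤ B := by nlinarith
      constructor <;> linarith
    · have hS38 : (3:ℝ)/8 ≤ S := by linarith
      have h38 : ((3:ℝ)/8) ^ 3 ≤ S ^ 3 := pow_le_pow_left₀ (by norm_num) hS38 3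
      have hcA2 : c ^ 2 ≤ A ^ 2 := by
        rw [hc2, div_le_iff₀ hC₁]; linarith
      have hcA : c ≤ A := by nlinarith
      constructor <;> linarith
  have hresp := anticonc (P n) (hXpm n) (hXp0 n)
    ((hXp4 n).mono_exponent (by norm_num)) (half_pos hc)
    hmin.1 hS2
  have hresm := anticonc (P n) (hXmm n) (hXm0 n)
    ((hXm4 n).mono_exponent (by norm_num)) (half_pos hc)
    hmin.2 hT2
  have hsetp : {ω | c/2/4 < Xp n ω} = {ω | c/2/4 < Z n ω} := by
    ext ω
    simp only [Set.mem_setOf_eq, hXpdef, lt_max_iff]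
    have : ¬ (c/2/4 < 0) := not_lt.2 hv.le
    tauto
  have hsetm : {ω | c/2/4 < Xm n ω} = {ω | Z n ω < -(c/2/4)} := by
    ext ω
    simp only [Set.mem_setOf_eq, hXmdef, lt_max_iff]
    have h0 : ¬ (c/2/4 < 0) := not_lt.2 hv.le
    constructor
    · rintro (h | h)
      · linarith
      · exact absurd h h0
    · intro h; left; linarith
  rw [hsetp] at hresp
  rw [hsetm] at hresm
  have hmep : P n {ω | c/2/4 < Z n ω} = P n {ω | c/2/4 < Y n ω} := by
    refine (measure_congr ?_).symm
    filter_upwards [hZae n] with ω h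
    show (c/2/4 < Y n ω) = (c/2/4 < Z n ω)
    rw [h]
  have hmem : P n {ω | Z n ω < -(c/2/4)} = P n {ω | Y n ω < -(c/2/4)} := by
    refine (measure_congr ?_).symm
    filter_upwards [hZae n] with ω h
    show (Y n ω < -(c/2/4)) = (Z n ω < -(c/2/4))
    rw [h]
  rw [hmep] at hresp
  rw [hmem] at hresm
  exact ⟨hresm, hresp⟩
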